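/- Let D be a non-Hamiltonian 2-strong digraph of order n such that n−1 of its vertices have degree at least n+1 and the remaining vertex z has degree at most n−2. Suppose C = x_1 x_2 … x_m z x_1, with 2 ≤ m ≤ n−3, is a longest directed cycle through z in D, the set Y = V(D) \ V(C) contains two distinct vertices y_1, y_2 that are mutually reachable in D⟨Y⟩ with d(y_i, {x_1, …, x_m}) = m+1 for each i ∈ {1,2}, and l is an integer with 2 ≤ l ≤ m−1 such that every vertex of {x_l, …, x_m} dominates both y_1 and y_2 and both y_1 and y_2 dominate every vertex of {x_1, …, x_l}. Suppose further that a and b are indices with 1 ≤ a ≤ l−1 and l+1 ≤ b ≤ m such that x_a x_b is an arc of D. Then: (i) for every i with a+1 ≤ i ≤ l−1, x_i z is not an arc of D; (ii) for every j with l+1 ≤ j ≤ b−1, z x_j is not an arc of D; (iii) for every i with a+1 ≤ i ≤ l and i−a ≤ 3, z x_i is not an arc of D; (iv) for every j with l ≤ j ≤ b−1 and b−j ≤ 3, x_j z is not an arc of D. -/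

import Mathlib

/-! A digraph on a vertex type `V` is given by its arc relation `A : V → V → Prop`
(this automatically forbids multiple arcs); looplessness is expressed by the
hypothesis `Irreflexive A`. -/

/-- The degree of `x`: its out-degree plus its in-degree. -/
noncomputable def degree {V : Type*} (A : V → V → Prop) (x : V) : ℕ :=
  {y | A x y}.ncard + {y | A y x}.ncard

/-- `degreeIn A x S` is the number of arcs between `x` and vertices of `S`,
in both directions. -/
noncomputable def degreeIn {V : Type*} (A : V → V → Prop) (x : V) (S : Set V) : ℕ :=
  {y ∈ S | A x y}.ncard + {y ∈ S | A y x}.ncard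

/-- `c : Fin m → V` is a directed cycle of length `m` (indices taken mod `m`). -/
def IsCycle {V : Type*} (A : V → V → Prop) {m : ℕ} (c : Fin m → V) : Prop :=
  2 ≤ m ∧ Function.Injective c ∧
    ∀ i : Fin m, A (c i) (c ⟨(i.val + 1) % m, Nat.mod_lt _ i.pos⟩)

/-- `p : Fin m → V` is a directed path on `m` vertices (of length `m - 1`). -/
def IsPath {V : Type*} (A : V → V → Prop) {m : ℕ} (p : Fin m → V) : Prop :=
  Function.Injective p ∧ ∀ (i : Fin m) (h : i.val + 1 < m), A (p i) (p ⟨i.val + 1, h⟩)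

/-- A digraph is Hamiltonian if it has a directed cycle through all of its vertices. -/
def IsHamiltonian {V : Type*} [Fintype V] (A : V → V → Prop) : Prop :=
  ∃ c : Fin (Fintype.card V) → V, IsCycle A c ∧ Function.Surjective c

/-- Reachability by a directed path staying inside the set `S`. -/
def ReachIn {V : Type*} (A : V → V → Prop) (S : Set V) : V → V → Prop :=
  Relation.ReflTransGen (fun u v => u ∈ S ∧ v ∈ S ∧ A u v)

/-- A digraph is strong if every vertex is reachable from every other by a directed path. -/
def IsStrong {V : Type*} (A : V → V → Prop) : Prop :=
  ∀ x y : V, Relation.ReflTransGen A x y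

/-- A digraph is `k`-strong if it has at least `k + 1` vertices and the deletion of
any set of at most `k - 1` vertices leaves a strong digraph. -/
def IsKStrong {V : Type*} [Fintype V] (A : V → V → Prop) (k : ℕ) : Prop :=
  k + 1 ≤ Fintype.card V ∧
    ∀ S : Set V, S.ncard ≤ k - 1 → ∀ x ∈ Sᶜ, ∀ y ∈ Sᶜ, ReachIn A Sᶜ x y

/-! ### Auxiliary machinery: building cycles from lists -/

theorem isCycle_ofList {V : Type*} {A : V → V → Prop} (L : List V)
    (h2 : 2 ≤ L.length) (hnd : L.Nodup) (hch : L.Chain' A)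
    (hcl : ∀ a ∈ L.getLast?, ∀ b ∈ L.head?, A a b) :
    IsCycle A L.get := by
  refine ⟨h2, List.nodup_iff_injective_get.mp hnd, ?_⟩
  intro i
  by_cases h : i.val + 1 < L.length
  · have h1 : A (L.get ⟨i.val, by omega⟩) (L.get ⟨i.val + 1, h⟩) :=
      List.isChain_iff_getElem.mp hch i.val (by omega)
    have hmod : (i.val + 1) % L.length = i.val + 1 := Nat.mod_eq_of_lt h
    convert h1 using 2
    all_goals exact Fin.ext hmod
  · have hlen : 0 < L.length := by omega
    have hlast : i.val = L.length - 1 := by omega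
    have hmod : (i.val + 1) % L.length = 0 := by
      rw [hlast]; rw [Nat.sub_add_cancel (by omega)]; exact Nat.mod_self _
    have hg1 : L.getLast? = some (L.get i) := by
      rw [List.getLast?_eq_getElem?]
      rw [List.getElem?_eq_getElem (by omega)]
      simp [List.get_eq_getElem, hlast]
    have hg2 : L.head? = some (L.get ⟨(i.val + 1) % L.length, Nat.mod_lt _ i.pos⟩) := by
      rw [List.head?_eq_getElem?]
      rw [List.getElem?_eq_getElem (by omega)]
      simp [List.get_eq_getElem, hmod]
    exact hcl _ hg1 _ hg2

section Seg
variable {V : Type*} {A : V → V → Prop} {m : ℕ} (x : Fin m → V) (hm : 0 < m)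

/-- the list `x_p, x_{p+1}, …, x_q` (indices mod `m`). -/
def xseg (p q : ℕ) : List V :=
  (List.range' p (q + 1 - p)).map (fun k => x ⟨k % m, Nat.mod_lt k hm⟩)

theorem length_xseg (p q : ℕ) : (xseg x hm p q).length = q + 1 - p := by
  simp [xseg]

theorem mem_xseg {p q : ℕ} (hq : q < m) {v : V} (hv : v ∈ xseg x hm p q) :
    ∃ k, ∃ (hk : k < m), p ≤ k ∧ k ≤ q ∧ v = x ⟨k, hk⟩ := by
  simp only [xseg, List.mem_map, List.mem_range'_1] at hv
  obtain ⟨k, ⟨hk1, hk2⟩, rfl⟩ := hv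
  have hkm : k < m := by omega
  exact ⟨k, hkm, hk1, by omega, by congr 1; exact Fin.ext (Nat.mod_eq_of_lt hkm)⟩

theorem xseg_ne_nil {p q : ℕ} (hpq : p ≤ q) : xseg x hm p q ≠ [] := by
  simp [xseg, List.range'_eq_nil_iff]; omega

theorem nodup_xseg (hinj : Function.Injective x) {p q : ℕ} (hq : q < m) :
    (xseg x hm p q).Nodup := by
  apply List.Nodup.map_on _ List.nodup_range'
  intro i hi j hj hij
  rw [List.mem_range'_1] at hi hj
  have hi' : i < m := by omega
  have hj' : j < m := by omega
  have := hinj hij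
  rw [Fin.mk.injEq, Nat.mod_eq_of_lt hi', Nat.mod_eq_of_lt hj'] at this
  exact this

theorem chain'_xseg (harc : ∀ (i : Fin m) (h : i.val + 1 < m), A (x i) (x ⟨i.val + 1, h⟩))
    {p q : ℕ} (hq : q < m) : (xseg x hm p q).Chain' A := by
  change List.IsChain A _
  rw [List.isChain_iff_getElem]
  intro i hi
  rw [length_xseg] at hi
  simp only [xseg, List.get_eq_getElem, List.getElem_map, List.getElem_range', one_mul]
  have h1 : p + i < m := by omega
  have h2 : p + (i + 1) < m := by omega
  have h3 : p + i + 1 < m := by omega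
  have := harc ⟨p + i, h1⟩ (by simpa using h3)
  convert this using 2
  · exact Fin.ext (Nat.mod_eq_of_lt h1)
  · refine Fin.ext ?_
    show (p + (i + 1)) % m = p + i + 1
    rw [Nat.mod_eq_of_lt h2]; omega

theorem head?_xseg {p q : ℕ} (hpq : p ≤ q) :
    (xseg x hm p q).head? = some (x ⟨p % m, Nat.mod_lt p hm⟩) := by
  have : q + 1 - p = (q - p) + 1 := by omega
  rw [xseg, this, List.range'_succ]
  simp

theorem getLast?_xseg {p q : ℕ} (hpq : p ≤ q) :
    (xseg x hm p q).getLast? = some (x ⟨q % m, Nat.mod_lt q hm⟩) := by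
  rw [List.getLast?_eq_getElem?]
  have hl : (xseg x hm p q).length = q + 1 - p := length_xseg x hm p q
  rw [List.getElem?_eq_getElem (by omega)]
  simp only [xseg, List.getElem_map, List.getElem_range', List.length_map,
    List.length_range', one_mul]
  refine congrArg some (congrArg x (Fin.ext ?_))
  show (p + (q + 1 - p - 1)) % m = q % m
  congr 1
  omega

theorem not_mem_xseg {p q : ℕ} (hq : q < m) {v : V} (hv : v ∉ Set.range x) :
    v ∉ xseg x hm p q := by
  intro h
  obtain ⟨k, hk, _, _, rfl⟩ := mem_xseg x hm hq h
  exact hv ⟨_, rfl⟩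

theorem disjoint_xseg {p q p' q' : ℕ} (hinj : Function.Injective x)
    (hq : q < m) (hq' : q' < m) (h : q < p' ∨ q' < p) :
    (xseg x hm p q).Disjoint (xseg x hm p' q') := by
  intro v hv hv'
  obtain ⟨k, hk, hk1, hk2, rfl⟩ := mem_xseg x hm hq hv
  obtain ⟨k', hk', hk1', hk2', he⟩ := mem_xseg x hm hq' hv'
  have := hinj he
  rw [Fin.mk.injEq] at this
  omega

end Seg

set_option maxHeartbeats 2000000 in
/-- Claim 2: in the situation of Lemma 4 with `l` as in (1), suppose `x_a ∈ E`,
`x_b ∈ F` (so, in `Fin m` indexing, `a.val ≤ l - 2` and `l ≤ b.val`) and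
`x_a x_b` is an arc.  Then (with the paper's 1-based index `t` corresponding to the
`Fin m` index `t - 1`):
(i)  for `a + 1 ≤ t ≤ l - 1`, `x_t z` is not an arc;
(ii) for `l + 1 ≤ t ≤ b - 1`, `z x_t` is not an arc;
(iii) for `a + 1 ≤ t ≤ l` with `t - a ≤ 3`, `z x_t` is not an arc;
(iv) for `l ≤ t ≤ b - 1` with `b - t ≤ 3`, `x_t z` is not an arc. -/
theorem statement15 {V : Type*} [Fintype V] [DecidableEq V] (A : V → V → Prop)
    (hirr : Irreflexive A)
    (n : ℕ) (hcard : Fintype.card V = n)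
    (h2strong : IsKStrong A 2)
    (hnonham : ¬ IsHamiltonian A)
    (z : V)
    (hdeg : ∀ v : V, v ≠ z → n + 1 ≤ degree A v)
    (hdegz : degree A z ≤ n - 2)
    (m : ℕ) (hm2 : 2 ≤ m) (hmn : m ≤ n - 3)
    -- the cycle C = x₁ x₂ … x_m z x₁ of length m + 1 through z
    (x : Fin m → V) (hxinj : Function.Injective x) (hzx : z ∉ Set.range x)
    (harc : ∀ (i : Fin m) (h : i.val + 1 < m), A (x i) (x ⟨i.val + 1, h⟩))
    (harcz1 : A (x ⟨m - 1, by omega⟩) z)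
    (harcz2 : A z (x ⟨0, by omega⟩))
    -- C is a longest cycle through z
    (hlongest : ∀ (r : ℕ) (c : Fin r → V), IsCycle A c → z ∈ Set.range c → r ≤ m + 1)
    (Y : Set V) (hY : Y = (Set.range x ∪ {z})ᶜ)
    (y₁ y₂ : V) (hy₁ : y₁ ∈ Y) (hy₂ : y₂ ∈ Y) (hyne : y₁ ≠ y₂)
    -- y₁ and y₂ are mutually reachable in D⟨Y⟩
    (hreach₁ : ReachIn A Y y₁ y₂) (hreach₂ : ReachIn A Y y₂ y₁)
    (hdy₁ : degreeIn A y₁ (Set.range x) = m + 1)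
    (hdy₂ : degreeIn A y₂ (Set.range x) = m + 1)
    (l : ℕ) (hl2 : 2 ≤ l) (hlm : l ≤ m - 1)
    (hdom₁ : ∀ i : Fin m, l - 1 ≤ i.val → A (x i) y₁ ∧ A (x i) y₂)
    (hdom₂ : ∀ i : Fin m, i.val ≤ l - 1 → A y₁ (x i) ∧ A y₂ (x i))
    (a b : Fin m) (ha : a.val ≤ l - 2) (hb : l ≤ b.val)
    (hab : A (x a) (x b)) :
    (∀ i : Fin m, a.val + 1 ≤ i.val → i.val ≤ l - 2 → ¬ A (x i) z) ∧
    (∀ j : Fin m, l ≤ j.val → j.val + 1 ≤ b.val → ¬ A z (x j)) ∧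
    (∀ i : Fin m, a.val + 1 ≤ i.val → i.val ≤ l - 1 → i.val - a.val ≤ 3 →
      ¬ A z (x i)) ∧
    (∀ j : Fin m, l - 1 ≤ j.val → j.val < b.val → b.val - j.val ≤ 3 →
      ¬ A (x j) z) := by
  have hm0 : 0 < m := by omega
  have hm3 : 3 ≤ m := by omega
  have hbm : b.val < m := b.isLt
  have ham : a.val < m := a.isLt
  -- basic membership facts
  have hYx : ∀ v ∈ Y, v ∉ Set.range x := by
    intro v hv
    rw [hY] at hv
    intro h
    exact hv (Or.inl h)
  have hYz : ∀ v ∈ Y, v ≠ z := by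
    intro v hv
    rw [hY] at hv
    intro h
    exact hv (Or.inr h)
  -- the key tool: any "cycle list" through z has length at most m + 1
  have key : ∀ L : List V, 2 ≤ L.length → L.Nodup → L.Chain' A →
      (∀ u ∈ L.getLast?, ∀ v ∈ L.head?, A u v) → z ∈ L → L.length ≤ m + 1 := by
    intro L h2 hnd hch hcl hzL
    obtain ⟨i, hi⟩ := List.mem_iff_get.mp hzL
    exact hlongest _ _ (isCycle_ofList L h2 hnd hch hcl) ⟨i, hi⟩
  have hXeq : ∀ (k : ℕ) (hk : k < m), x ⟨k % m, Nat.mod_lt k hm0⟩ = x ⟨k, hk⟩ := by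
    intro k hk
    congr 1
    exact Fin.ext (Nat.mod_eq_of_lt hk)
  -- no arc from y₁ or y₂ to z
  have noYz : ∀ y, y ∉ Set.range x → y ≠ z → A (x ⟨m - 1, by omega⟩) y → A y z → False := by
    intro y hyx hyz harcy hyzarc
    have hlen : (([z] ++ xseg x hm0 0 (m - 1)) ++ [y]).length = m + 2 := by
      simp [length_xseg]; omega
    have hkey := key (([z] ++ xseg x hm0 0 (m - 1)) ++ [y]) (by omega) ?_ ?_ ?_ ?_
    · omega
    · -- Nodup
      rw [List.nodup_append', List.nodup_append']
      refine ⟨⟨by simp, nodup_xseg x hm0 hxinj (by omega), ?_⟩, by simp, ?_⟩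
      · intro v hv hv'
        simp only [List.mem_singleton] at hv
        subst hv
        exact not_mem_xseg x hm0 (by omega) hzx hv'
      · intro v hv hv'
        simp only [List.mem_singleton] at hv'
        subst hv'
        rcases List.mem_append.mp hv with h | h
        · simp only [List.mem_singleton] at h
          exact hyz h
        · exact not_mem_xseg x hm0 (by omega) hyx h
    · -- Chain'
      show List.IsChain A _
      rw [List.isChain_append, List.isChain_append]
      refine ⟨⟨by simp, chain'_xseg x hm0 harc (by omega), ?_⟩, by simp, ?_⟩
      · intro u hu v hv
        simp only [List.getLast?_singleton, Option.mem_some_iff] at hu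
        rw [head?_xseg x hm0 (by omega), Option.mem_some_iff] at hv
        subst hu; subst hv
        rw [hXeq 0 hm0]
        exact harcz2
      · intro u hu v hv
        rw [List.getLast?_append_of_ne_nil _ (xseg_ne_nil x hm0 (by omega)),
          getLast?_xseg x hm0 (by omega), Option.mem_some_iff] at hu
        simp only [List.head?_cons, Option.mem_some_iff] at hv
        subst hu; subst hv
        rw [hXeq (m - 1) (by omega)]
        exact harcy
    · -- closing arc
      intro u hu v hv
      rw [List.getLast?_append_of_ne_nil _ (List.cons_ne_nil y []),
        List.getLast?_singleton, Option.mem_some_iff] at hu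
      rw [List.head?_append_of_ne_nil _ (by simp), List.head?_append_of_ne_nil _ (by simp),
        List.head?_cons, Option.mem_some_iff] at hv
      subst hu; subst hv
      exact hyzarc
    · -- z is a member
      simp
  -- no arc from z to y₁ or y₂
  have noZy : ∀ y, y ∉ Set.range x → y ≠ z → A y (x ⟨0, hm0⟩) → A z y → False := by
    intro y hyx hyz harcy hzyarc
    have hlen : (([z] ++ [y]) ++ xseg x hm0 0 (m - 1)).length = m + 2 := by
      simp [length_xseg]; omega
    have hkey := key (([z] ++ [y]) ++ xseg x hm0 0 (m - 1)) (by omega) ?_ ?_ ?_ ?_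
    · omega
    · -- Nodup
      rw [List.nodup_append', List.nodup_append']
      refine ⟨⟨by simp, by simp, ?_⟩, nodup_xseg x hm0 hxinj (by omega), ?_⟩
      · intro v hv hv'
        simp only [List.mem_singleton] at hv hv'
        subst hv; subst hv'
        exact hyz rfl
      · intro v hv hv'
        rcases List.mem_append.mp hv with h | h
        · simp only [List.mem_singleton] at h
          subst h
          exact not_mem_xseg x hm0 (by omega) hzx hv'
        · simp only [List.mem_singleton] at h
          subst h
          exact not_mem_xseg x hm0 (by omega) hyx hv'
    · -- Chain'
      show List.IsChain A _
      rw [List.isChain_append, List.isChain_append]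
      refine ⟨⟨by simp, by simp, ?_⟩, chain'_xseg x hm0 harc (by omega), ?_⟩
      · intro u hu v hv
        simp only [List.getLast?_singleton, Option.mem_some_iff] at hu
        simp only [List.head?_cons, Option.mem_some_iff] at hv
        subst hu; subst hv
        exact hzyarc
      · intro u hu v hv
        rw [List.getLast?_append_of_ne_nil _ (List.cons_ne_nil y []),
          List.getLast?_singleton, Option.mem_some_iff] at hu
        rw [head?_xseg x hm0 (by omega), Option.mem_some_iff] at hv
        subst hu; subst hv
        rw [hXeq 0 hm0]
        exact harcy
    · -- closing arc
      intro u hu v hv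
      rw [List.getLast?_append_of_ne_nil _ (xseg_ne_nil x hm0 (by omega)),
        getLast?_xseg x hm0 (by omega), Option.mem_some_iff] at hu
      rw [List.head?_append_of_ne_nil _ (by simp), List.head?_append_of_ne_nil _ (by simp),
        List.head?_cons, Option.mem_some_iff] at hv
      subst hu; subst hv
      rw [hXeq (m - 1) (by omega)]
      exact harcz1
    · simp
  -- hence no arcs between z and {y₁, y₂}
  have hy₁zn : ¬ A y₁ z :=
    fun h => noYz y₁ (hYx _ hy₁) (hYz _ hy₁)
      ((hdom₁ ⟨m - 1, by omega⟩ (show l - 1 ≤ m - 1 by omega)).1) h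
  have hy₂zn : ¬ A y₂ z :=
    fun h => noYz y₂ (hYx _ hy₂) (hYz _ hy₂)
      ((hdom₁ ⟨m - 1, by omega⟩ (show l - 1 ≤ m - 1 by omega)).2) h
  have hzy₁n : ¬ A z y₁ :=
    fun h => noZy y₁ (hYx _ hy₁) (hYz _ hy₁)
      ((hdom₂ ⟨0, hm0⟩ (show 0 ≤ l - 1 by omega)).1) h
  have hzy₂n : ¬ A z y₂ :=
    fun h => noZy y₂ (hYx _ hy₂) (hYz _ hy₂)
      ((hdom₂ ⟨0, hm0⟩ (show 0 ≤ l - 1 by omega)).2) h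
  -- cardinality of Y
  have hncard : (Set.range x).ncard = m := by
    rw [← Set.image_univ, Set.ncard_image_of_injective _ hxinj, Set.ncard_univ,
      Nat.card_eq_fintype_card, Fintype.card_fin]
  have hYcard : Y.ncard = n - m - 1 ∧ m + 1 ≤ n := by
    have h1 : (Set.range x ∪ {z}).ncard = m + 1 := by
      rw [Set.ncard_union_eq (by simpa using hzx) (Set.toFinite _) (Set.toFinite _), hncard,
        Set.ncard_singleton]
    have h2 : (Set.range x ∪ {z}).ncard + Y.ncard = n := by
      rw [hY]
      rw [← hcard, ← Nat.card_eq_fintype_card]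
      exact Set.ncard_add_ncard_compl _
    constructor <;> omega
  -- lower bound on the number of arcs between y ∈ {y₁,y₂} and Y
  have hdY : ∀ y, y ∈ Y → degreeIn A y (Set.range x) = m + 1 → ¬ A y z → ¬ A z y →
      n - m ≤ {v ∈ Y | A y v}.ncard + {v ∈ Y | A v y}.ncard := by
    intro y hyY hdy hyzn hzyn
    have hout : {v | A y v} = {v ∈ Set.range x | A y v} ∪ {v ∈ Y | A y v} := by
      ext v
      constructor
      · intro hv
        rcases em (v ∈ Set.range x) with h | h
        · exact Or.inl ⟨h, hv⟩
        · refine Or.inr ⟨?_, hv⟩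
          rw [hY]
          intro hc
          rcases hc with hc | hc
          · exact h hc
          · rw [Set.mem_singleton_iff] at hc
            subst hc
            exact hyzn hv
      · rintro (⟨_, h⟩ | ⟨_, h⟩) <;> exact h
    have hin : {v | A v y} = {v ∈ Set.range x | A v y} ∪ {v ∈ Y | A v y} := by
      ext v
      constructor
      · intro hv
        rcases em (v ∈ Set.range x) with h | h
        · exact Or.inl ⟨h, hv⟩
        · refine Or.inr ⟨?_, hv⟩
          rw [hY]
          intro hc
          rcases hc with hc | hc
          · exact h hc
          · rw [Set.mem_singleton_iff] at hc
            subst hc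
            exact hzyn hv
      · rintro (⟨_, h⟩ | ⟨_, h⟩) <;> exact h
    have hdisj1 : Disjoint {v ∈ Set.range x | A y v} {v ∈ Y | A y v} := by
      rw [Set.disjoint_left]
      rintro v ⟨hv1, _⟩ ⟨hv2, _⟩
      exact hYx v hv2 hv1
    have hdisj2 : Disjoint {v ∈ Set.range x | A v y} {v ∈ Y | A v y} := by
      rw [Set.disjoint_left]
      rintro v ⟨hv1, _⟩ ⟨hv2, _⟩
      exact hYx v hv2 hv1
    have hdeg' := hdeg y (hYz _ hyY)
    rw [degree, hout, hin, Set.ncard_union_eq hdisj1 (Set.toFinite _) (Set.toFinite _),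
      Set.ncard_union_eq hdisj2 (Set.toFinite _) (Set.toFinite _)] at hdeg'
    have : degreeIn A y (Set.range x) =
        {v ∈ Set.range x | A y v}.ncard + {v ∈ Set.range x | A v y}.ncard := rfl
    rw [this] at hdy
    omega
  -- existence of the middle vertex w
  have hw : ∃ w, w ∈ Y ∧ w ≠ y₁ ∧ w ≠ y₂ ∧
      ((A y₁ w ∧ A w y₂) ∨ (A y₂ w ∧ A w y₁)) := by
    by_contra hcon
    push_neg at hcon
    have hd1 := hdY y₁ hy₁ hdy₁ hy₁zn hzy₁n
    have hd2 := hdY y₂ hy₂ hdy₂ hy₂zn hzy₂n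
    have haux : ∀ u v : V, u ∈ Y → v ∈ Y → u ≠ v →
        (∀ w, w ∈ Y → w ≠ u → w ≠ v → ¬ (A u w ∧ A w v)) →
        {t ∈ Y | A u t}.ncard + {t ∈ Y | A t v}.ncard ≤ Y.ncard := by
      intro u v huY hvY huvne hno
      set O : Set V := {t ∈ Y | A u t} \ {v} with hO
      set I : Set V := {t ∈ Y | A t v} \ {u} with hI
      have hOsub : O ⊆ Y \ {u, v} := by
        rintro t ⟨⟨htY, htA⟩, htv⟩
        refine ⟨htY, ?_⟩
        simp only [Set.mem_insert_iff, Set.mem_singleton_iff] at *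
        push_neg
        exact ⟨fun h => hirr u (h ▸ htA), htv⟩
      have hIsub : I ⊆ Y \ {u, v} := by
        rintro t ⟨⟨htY, htA⟩, htu⟩
        refine ⟨htY, ?_⟩
        simp only [Set.mem_insert_iff, Set.mem_singleton_iff] at *
        push_neg
        exact ⟨htu, fun h => hirr v (h ▸ htA)⟩
      have hOI : Disjoint O I := by
        rw [Set.disjoint_left]
        rintro t ⟨⟨htY, htA⟩, htv⟩ ⟨⟨_, htA'⟩, htu⟩
        simp only [Set.mem_singleton_iff] at htv htu
        exact hno t htY htu htv ⟨htA, htA'⟩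
      have hcard1 : O.ncard + I.ncard ≤ (Y \ {u, v}).ncard := by
        rw [← Set.ncard_union_eq hOI (Set.toFinite _) (Set.toFinite _)]
        exact Set.ncard_le_ncard (Set.union_subset hOsub hIsub) (Set.toFinite _)
      have hYuv : (Y \ {u, v}).ncard = Y.ncard - 2 := by
        rw [Set.ncard_diff (by rw [Set.insert_subset_iff]; exact ⟨huY, by simpa using hvY⟩)
          (Set.toFinite _)]
        rw [Set.ncard_pair huvne]
      have hO1 : {t ∈ Y | A u t}.ncard ≤ O.ncard + 1 := by
        have : {t ∈ Y | A u t} ⊆ O ∪ {v} := by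
          intro t ht
          rcases em (t = v) with h | h
          · exact Or.inr h
          · exact Or.inl ⟨ht, h⟩
        calc {t ∈ Y | A u t}.ncard ≤ (O ∪ {v}).ncard :=
              Set.ncard_le_ncard this (Set.toFinite _)
          _ ≤ O.ncard + 1 := by
              simpa using Set.ncard_union_le O {v}
      have hI1 : {t ∈ Y | A t v}.ncard ≤ I.ncard + 1 := by
        have : {t ∈ Y | A t v} ⊆ I ∪ {u} := by
          intro t ht
          rcases em (t = u) with h | h
          · exact Or.inr h
          · exact Or.inl ⟨ht, h⟩
        calc {t ∈ Y | A t v}.ncard ≤ (I ∪ {u}).ncard :=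
              Set.ncard_le_ncard this (Set.toFinite _)
          _ ≤ I.ncard + 1 := by
              simpa using Set.ncard_union_le I {u}
      have hY2 : 2 ≤ Y.ncard := by
        have : ({u, v} : Set V) ⊆ Y := by
          rw [Set.insert_subset_iff]
          exact ⟨huY, by simpa using hvY⟩
        have := Set.ncard_le_ncard this (Set.toFinite _)
        rw [Set.ncard_pair huvne] at this
        omega
      omega
    have h12 := haux y₁ y₂ hy₁ hy₂ hyne (fun w hwY hw1 hw2 hA =>
      (hcon w hwY hw1 hw2).1 hA.1 hA.2)
    have h21 := haux y₂ y₁ hy₂ hy₁ hyne.symm (fun w hwY hw1 hw2 hA =>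
      (hcon w hwY hw2 hw1).2 hA.1 hA.2)
    have hYc := hYcard.1
    have hmn' := hYcard.2
    omega
  -- Shape 1 : cycle  z x₀…x_a x_b…x_{m-1} M x_{a+1}…x_t z   (uses arc x_t → z)
  have shape1 : ∀ (t : ℕ) (M : List V) (ht1 : a.val + 1 ≤ t) (ht2 : t < b.val),
      A (x ⟨t, by omega⟩) z →
      M ≠ [] → M.Nodup → M.Chain' A →
      (∀ u ∈ M.head?, A (x ⟨m - 1, by omega⟩) u) →
      (∀ u ∈ M.getLast?, A u (x ⟨a.val + 1, by omega⟩)) →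
      (∀ v ∈ M, v ≠ z ∧ ∀ (k : Fin m), x k = v → t + 1 ≤ k.val ∧ k.val + 1 ≤ b.val) →
      b.val ≤ t + M.length → False := by
    intro t M ht1 ht2 htz hMne hMnd hMch hMh hMl hMmem hMlen
    have htm : t < m := by omega
    have hne1 : xseg x hm0 (a.val + 1) t ≠ [] := xseg_ne_nil x hm0 (by omega)
    have hne2 : xseg x hm0 0 a.val ≠ [] := xseg_ne_nil x hm0 (by omega)
    have hne3 : xseg x hm0 b.val (m - 1) ≠ [] := xseg_ne_nil x hm0 (by omega)
    set R3 := M ++ xseg x hm0 (a.val + 1) t with hR3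
    set R2 := xseg x hm0 b.val (m - 1) ++ R3 with hR2
    set R1 := xseg x hm0 0 a.val ++ R2 with hR1
    have hne4 : R3 ≠ [] := fun h => hne1 (List.append_eq_nil_iff.mp h).2
    have hne5 : R2 ≠ [] := fun h => hne3 (List.append_eq_nil_iff.mp h).1
    have hne6 : R1 ≠ [] := fun h => hne2 (List.append_eq_nil_iff.mp h).1
    have hlen : ([z] ++ R1).length = m + 2 + (t + M.length - b.val) := by
      simp [hR1, hR2, hR3, length_xseg]
      omega
    have hkey := key ([z] ++ R1) (by omega) ?_ ?_ ?_ ?_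
    · omega
    · -- Nodup
      rw [List.nodup_append', hR1, List.nodup_append', hR2, List.nodup_append', hR3,
        List.nodup_append']
      refine ⟨by simp, ⟨nodup_xseg x hm0 hxinj (by omega),
        ⟨nodup_xseg x hm0 hxinj (by omega), ⟨hMnd, nodup_xseg x hm0 hxinj (by omega), ?_⟩, ?_⟩,
        ?_⟩, ?_⟩
      · -- M disjoint from xseg (a+1) t
        intro v hv hv'
        obtain ⟨k, hk, hk1, hk2, rfl⟩ := mem_xseg x hm0 (by omega) hv'
        have h9 : t + 1 ≤ k ∧ k + 1 ≤ b.val := (hMmem _ hv).2 ⟨k, hk⟩ rfl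
        omega
      · -- xseg b (m-1) disjoint from R3
        intro v hv hv'
        obtain ⟨k, hk, hk1, hk2, rfl⟩ := mem_xseg x hm0 (by omega) hv
        rcases List.mem_append.mp hv' with h | h
        · have h9 : t + 1 ≤ k ∧ k + 1 ≤ b.val := (hMmem _ h).2 ⟨k, hk⟩ rfl
          omega
        · obtain ⟨k', hk', hk1', hk2', he⟩ := mem_xseg x hm0 (by omega) h
          have := hxinj he
          rw [Fin.mk.injEq] at this
          omega
      · -- xseg 0 a disjoint from R2
        intro v hv hv'
        obtain ⟨k, hk, hk1, hk2, rfl⟩ := mem_xseg x hm0 (by omega) hv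
        rcases List.mem_append.mp hv' with h | h
        · obtain ⟨k', hk', hk1', hk2', he⟩ := mem_xseg x hm0 (by omega) h
          have := hxinj he
          rw [Fin.mk.injEq] at this
          omega
        · rcases List.mem_append.mp h with h' | h'
          · have h9 : t + 1 ≤ k ∧ k + 1 ≤ b.val := (hMmem _ h').2 ⟨k, hk⟩ rfl
            omega
          · obtain ⟨k', hk', hk1', hk2', he⟩ := mem_xseg x hm0 (by omega) h'
            have := hxinj he
            rw [Fin.mk.injEq] at this
            omega
      · -- [z] disjoint from R1
        intro v hv hv'
        simp only [List.mem_singleton] at hv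
        subst hv
        rcases List.mem_append.mp hv' with h | h
        · exact not_mem_xseg x hm0 (by omega) hzx h
        · rcases List.mem_append.mp h with h' | h'
          · exact not_mem_xseg x hm0 (by omega) hzx h'
          · rcases List.mem_append.mp h' with h'' | h''
            · exact (hMmem _ h'').1 rfl
            · exact not_mem_xseg x hm0 (by omega) hzx h''
    · -- Chain'
      show List.IsChain A _
      rw [List.isChain_append, hR1, List.isChain_append, hR2, List.isChain_append, hR3,
        List.isChain_append]
      refine ⟨by simp, ⟨chain'_xseg x hm0 harc (by omega),
        ⟨chain'_xseg x hm0 harc (by omega), ⟨hMch, chain'_xseg x hm0 harc (by omega), ?_⟩, ?_⟩,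
        ?_⟩, ?_⟩
      · -- M → x_{a+1}
        intro u hu v hv
        rw [head?_xseg x hm0 (by omega), Option.mem_some_iff] at hv
        subst hv
        rw [hXeq (a.val + 1) (by omega)]
        exact hMl u hu
      · -- x_{m-1} → M
        intro u hu v hv
        rw [getLast?_xseg x hm0 (by omega), Option.mem_some_iff] at hu
        rw [List.head?_append_of_ne_nil _ hMne] at hv
        subst hu
        rw [hXeq (m - 1) (by omega)]
        exact hMh v hv
      · -- x_a → x_b
        intro u hu v hv
        rw [getLast?_xseg x hm0 (by omega), Option.mem_some_iff] at hu
        rw [List.head?_append_of_ne_nil _ hne3, head?_xseg x hm0 (by omega),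
          Option.mem_some_iff] at hv
        subst hu; subst hv
        rw [hXeq a.val (by omega), hXeq b.val (by omega)]
        simpa [Fin.eta] using hab
      · -- z → x_0
        intro u hu v hv
        simp only [List.getLast?_singleton, Option.mem_some_iff] at hu
        rw [List.head?_append_of_ne_nil _ hne2, head?_xseg x hm0 (by omega),
          Option.mem_some_iff] at hv
        subst hu; subst hv
        rw [hXeq 0 hm0]
        exact harcz2
    · -- closing arc x_t → z
      intro u hu v hv
      rw [List.getLast?_append_of_ne_nil _ hne6, hR1, List.getLast?_append_of_ne_nil _ hne5,
        hR2, List.getLast?_append_of_ne_nil _ hne4, hR3, List.getLast?_append_of_ne_nil _ hne1,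
        getLast?_xseg x hm0 (by omega), Option.mem_some_iff] at hu
      rw [List.head?_append_of_ne_nil _ (by simp), List.head?_cons, Option.mem_some_iff] at hv
      subst hu; subst hv
      rw [hXeq t htm]
      exact htz
    · simp
  -- Shape 2 : cycle  z x_t…x_{b-1} M x₀…x_a x_b…x_{m-1} z   (uses arc z → x_t)
  have shape2 : ∀ (t : ℕ) (M : List V) (ht1 : a.val + 1 ≤ t) (ht2 : t < b.val),
      A z (x ⟨t, by omega⟩) →
      M ≠ [] → M.Nodup → M.Chain' A →
      (∀ u ∈ M.head?, A (x ⟨b.val - 1, by omega⟩) u) →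
      (∀ u ∈ M.getLast?, A u (x ⟨0, hm0⟩)) →
      (∀ v ∈ M, v ≠ z ∧ ∀ (k : Fin m), x k = v → a.val + 1 ≤ k.val ∧ k.val < t) →
      t ≤ a.val + M.length → False := by
    intro t M ht1 ht2 hzt hMne hMnd hMch hMh hMl hMmem hMlen
    have htm : t < m := by omega
    have hne1 : xseg x hm0 t (b.val - 1) ≠ [] := xseg_ne_nil x hm0 (by omega)
    have hne2 : xseg x hm0 0 a.val ≠ [] := xseg_ne_nil x hm0 (by omega)
    have hne3 : xseg x hm0 b.val (m - 1) ≠ [] := xseg_ne_nil x hm0 (by omega)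
    set R3 := xseg x hm0 0 a.val ++ xseg x hm0 b.val (m - 1) with hR3
    set R2 := M ++ R3 with hR2
    set R1 := xseg x hm0 t (b.val - 1) ++ R2 with hR1
    have hne4 : R3 ≠ [] := fun h => hne2 (List.append_eq_nil_iff.mp h).1
    have hne5 : R2 ≠ [] := fun h => hMne (List.append_eq_nil_iff.mp h).1
    have hne6 : R1 ≠ [] := fun h => hne1 (List.append_eq_nil_iff.mp h).1
    have hlen : ([z] ++ R1).length = m + 2 + (a.val + M.length - t) := by
      simp [hR1, hR2, hR3, length_xseg]
      omega
    have hkey := key ([z] ++ R1) (by omega) ?_ ?_ ?_ ?_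
    · omega
    · -- Nodup
      rw [List.nodup_append', hR1, List.nodup_append', hR2, List.nodup_append', hR3,
        List.nodup_append']
      refine ⟨by simp, ⟨nodup_xseg x hm0 hxinj (by omega),
        ⟨hMnd, ⟨nodup_xseg x hm0 hxinj (by omega), nodup_xseg x hm0 hxinj (by omega), ?_⟩,
          ?_⟩, ?_⟩, ?_⟩
      · -- xseg 0 a disjoint from xseg b (m-1)
        exact disjoint_xseg x hm0 hxinj (by omega) (by omega) (by omega)
      · -- M disjoint from R3
        intro v hv hv'
        rcases List.mem_append.mp hv' with h | h
        · obtain ⟨k, hk, hk1, hk2, rfl⟩ := mem_xseg x hm0 (by omega) h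
          have h9 : a.val + 1 ≤ k ∧ k < t := (hMmem _ hv).2 ⟨k, hk⟩ rfl
          omega
        · obtain ⟨k, hk, hk1, hk2, rfl⟩ := mem_xseg x hm0 (by omega) h
          have h9 : a.val + 1 ≤ k ∧ k < t := (hMmem _ hv).2 ⟨k, hk⟩ rfl
          omega
      · -- xseg t (b-1) disjoint from R2
        intro v hv hv'
        obtain ⟨k, hk, hk1, hk2, rfl⟩ := mem_xseg x hm0 (by omega) hv
        rcases List.mem_append.mp hv' with h | h
        · have h9 : a.val + 1 ≤ k ∧ k < t := (hMmem _ h).2 ⟨k, hk⟩ rfl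
          omega
        · rcases List.mem_append.mp h with h' | h'
          · obtain ⟨k', hk', hk1', hk2', he⟩ := mem_xseg x hm0 (by omega) h'
            have := hxinj he
            rw [Fin.mk.injEq] at this
            omega
          · obtain ⟨k', hk', hk1', hk2', he⟩ := mem_xseg x hm0 (by omega) h'
            have := hxinj he
            rw [Fin.mk.injEq] at this
            omega
      · -- [z] disjoint from R1
        intro v hv hv'
        simp only [List.mem_singleton] at hv
        subst hv
        rcases List.mem_append.mp hv' with h | h
        · exact not_mem_xseg x hm0 (by omega) hzx h
        · rcases List.mem_append.mp h with h' | h'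
          · exact (hMmem _ h').1 rfl
          · rcases List.mem_append.mp h' with h'' | h''
            · exact not_mem_xseg x hm0 (by omega) hzx h''
            · exact not_mem_xseg x hm0 (by omega) hzx h''
    · -- Chain'
      show List.IsChain A _
      rw [List.isChain_append, hR1, List.isChain_append, hR2, List.isChain_append, hR3,
        List.isChain_append]
      refine ⟨by simp, ⟨chain'_xseg x hm0 harc (by omega),
        ⟨hMch, ⟨chain'_xseg x hm0 harc (by omega), chain'_xseg x hm0 harc (by omega), ?_⟩,
          ?_⟩, ?_⟩, ?_⟩
      · -- x_a → x_b
        intro u hu v hv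
        rw [getLast?_xseg x hm0 (by omega), Option.mem_some_iff] at hu
        rw [head?_xseg x hm0 (by omega), Option.mem_some_iff] at hv
        subst hu; subst hv
        rw [hXeq a.val (by omega), hXeq b.val (by omega)]
        simpa [Fin.eta] using hab
      · -- M → x_0
        intro u hu v hv
        rw [List.head?_append_of_ne_nil _ hne2, head?_xseg x hm0 (by omega),
          Option.mem_some_iff] at hv
        subst hv
        rw [hXeq 0 hm0]
        exact hMl u hu
      · -- x_{b-1} → M
        intro u hu v hv
        rw [getLast?_xseg x hm0 (by omega), Option.mem_some_iff] at hu
        rw [List.head?_append_of_ne_nil _ hMne] at hv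
        subst hu
        rw [hXeq (b.val - 1) (by omega)]
        exact hMh v hv
      · -- z → x_t
        intro u hu v hv
        simp only [List.getLast?_singleton, Option.mem_some_iff] at hu
        rw [List.head?_append_of_ne_nil _ hne1, head?_xseg x hm0 (by omega),
          Option.mem_some_iff] at hv
        subst hu; subst hv
        rw [hXeq t htm]
        exact hzt
    · -- closing arc x_{m-1} → z
      intro u hu v hv
      rw [List.getLast?_append_of_ne_nil _ hne6, hR1, List.getLast?_append_of_ne_nil _ hne5,
        hR2, List.getLast?_append_of_ne_nil _ hne4, hR3, List.getLast?_append_of_ne_nil _ hne3,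
        getLast?_xseg x hm0 (by omega), Option.mem_some_iff] at hu
      rw [List.head?_append_of_ne_nil _ (by simp), List.head?_cons, Option.mem_some_iff] at hv
      subst hu; subst hv
      rw [hXeq (m - 1) (by omega)]
      exact harcz1
    · simp
  obtain ⟨w, hwY, hwne1, hwne2, hwcase⟩ := hw
  have hy₁z := hYz _ hy₁
  have hy₂z := hYz _ hy₂
  have hy₁x := hYx _ hy₁
  have hy₂x := hYx _ hy₂
  refine ⟨?_, ?_, ?_, ?_⟩
  · -- Claim (i)
    intro i hi1 hi2 hxiz
    have hib : i.val < b.val := by omega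
    have hsne : xseg x hm0 (i.val + 1) (b.val - 1) ≠ [] := xseg_ne_nil x hm0 (by omega)
    have hRne : xseg x hm0 (i.val + 1) (b.val - 1) ++ [y₂] ≠ [] :=
      fun h => hsne (List.append_eq_nil_iff.mp h).1
    refine shape1 i.val ([y₁] ++ (xseg x hm0 (i.val + 1) (b.val - 1) ++ [y₂])) hi1 hib hxiz
      (by simp) ?_ ?_ ?_ ?_ ?_ ?_
    · -- Nodup
      rw [List.nodup_append', List.nodup_append']
      refine ⟨by simp, ⟨nodup_xseg x hm0 hxinj (by omega), by simp, ?_⟩, ?_⟩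
      · intro v hv hv'
        simp only [List.mem_singleton] at hv'
        subst hv'
        exact not_mem_xseg x hm0 (by omega) hy₂x hv
      · intro v hv hv'
        simp only [List.mem_singleton] at hv
        subst hv
        rcases List.mem_append.mp hv' with h | h
        · exact not_mem_xseg x hm0 (by omega) hy₁x h
        · simp only [List.mem_singleton] at h
          exact hyne h
    · -- Chain'
      show List.IsChain A _
      rw [List.isChain_append, List.isChain_append]
      refine ⟨by simp, ⟨chain'_xseg x hm0 harc (by omega), by simp, ?_⟩, ?_⟩
      · intro u hu v hv
        rw [getLast?_xseg x hm0 (by omega), Option.mem_some_iff] at hu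
        simp only [List.head?_cons, Option.mem_some_iff] at hv
        subst hu; subst hv
        rw [hXeq (b.val - 1) (by omega)]
        exact (hdom₁ ⟨b.val - 1, by omega⟩ (show l - 1 ≤ b.val - 1 by omega)).2
      · intro u hu v hv
        simp only [List.getLast?_singleton, Option.mem_some_iff] at hu
        rw [List.head?_append_of_ne_nil _ hsne, head?_xseg x hm0 (by omega),
          Option.mem_some_iff] at hv
        subst hu; subst hv
        rw [hXeq (i.val + 1) (by omega)]
        exact (hdom₂ ⟨i.val + 1, by omega⟩ (show i.val + 1 ≤ l - 1 by omega)).1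
    · -- head
      intro u hu
      rw [List.head?_append_of_ne_nil _ (by simp), List.head?_cons, Option.mem_some_iff] at hu
      subst hu
      exact (hdom₁ ⟨m - 1, by omega⟩ (show l - 1 ≤ m - 1 by omega)).1
    · -- last
      intro u hu
      rw [List.getLast?_append_of_ne_nil _ hRne,
        List.getLast?_append_of_ne_nil _ (List.cons_ne_nil y₂ []),
        List.getLast?_singleton, Option.mem_some_iff] at hu
      subst hu
      exact (hdom₂ ⟨a.val + 1, by omega⟩ (show a.val + 1 ≤ l - 1 by omega)).2
    · -- membership condition
      intro v hv
      rcases List.mem_append.mp hv with h | h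
      · simp only [List.mem_singleton] at h
        subst h
        exact ⟨hy₁z, fun k hk => (hy₁x ⟨k, hk⟩).elim⟩
      · rcases List.mem_append.mp h with h' | h'
        · obtain ⟨k', hk', hk1', hk2', rfl⟩ := mem_xseg x hm0 (by omega) h'
          refine ⟨fun hc => hzx ⟨_, hc⟩, fun k hk => ?_⟩
          have := hxinj hk
          rw [Fin.mk.injEq] at this
          omega
        · simp only [List.mem_singleton] at h'
          subst h'
          exact ⟨hy₂z, fun k hk => (hy₂x ⟨k, hk⟩).elim⟩
    · -- length
      simp only [List.length_append, List.length_singleton, length_xseg]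
      omega
  · -- Claim (ii)
    intro j hj1 hj2 hAzj
    have hjb : j.val < b.val := by omega
    have hsne : xseg x hm0 (a.val + 1) (j.val - 1) ≠ [] := xseg_ne_nil x hm0 (by omega)
    have hRne : xseg x hm0 (a.val + 1) (j.val - 1) ++ [y₂] ≠ [] :=
      fun h => hsne (List.append_eq_nil_iff.mp h).1
    refine shape2 j.val ([y₁] ++ (xseg x hm0 (a.val + 1) (j.val - 1) ++ [y₂])) (by omega) hjb
      hAzj (by simp) ?_ ?_ ?_ ?_ ?_ ?_
    · -- Nodup
      rw [List.nodup_append', List.nodup_append']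
      refine ⟨by simp, ⟨nodup_xseg x hm0 hxinj (by omega), by simp, ?_⟩, ?_⟩
      · intro v hv hv'
        simp only [List.mem_singleton] at hv'
        subst hv'
        exact not_mem_xseg x hm0 (by omega) hy₂x hv
      · intro v hv hv'
        simp only [List.mem_singleton] at hv
        subst hv
        rcases List.mem_append.mp hv' with h | h
        · exact not_mem_xseg x hm0 (by omega) hy₁x h
        · simp only [List.mem_singleton] at h
          exact hyne h
    · -- Chain'
      show List.IsChain A _
      rw [List.isChain_append, List.isChain_append]
      refine ⟨by simp, ⟨chain'_xseg x hm0 harc (by omega), by simp, ?_⟩, ?_⟩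
      · intro u hu v hv
        rw [getLast?_xseg x hm0 (by omega), Option.mem_some_iff] at hu
        simp only [List.head?_cons, Option.mem_some_iff] at hv
        subst hu; subst hv
        rw [hXeq (j.val - 1) (by omega)]
        exact (hdom₁ ⟨j.val - 1, by omega⟩ (show l - 1 ≤ j.val - 1 by omega)).2
      · intro u hu v hv
        simp only [List.getLast?_singleton, Option.mem_some_iff] at hu
        rw [List.head?_append_of_ne_nil _ hsne, head?_xseg x hm0 (by omega),
          Option.mem_some_iff] at hv
        subst hu; subst hv
        rw [hXeq (a.val + 1) (by omega)]
        exact (hdom₂ ⟨a.val + 1, by omega⟩ (show a.val + 1 ≤ l - 1 by omega)).1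
    · -- head
      intro u hu
      rw [List.head?_append_of_ne_nil _ (by simp), List.head?_cons, Option.mem_some_iff] at hu
      subst hu
      exact (hdom₁ ⟨b.val - 1, by omega⟩ (show l - 1 ≤ b.val - 1 by omega)).1
    · -- last
      intro u hu
      rw [List.getLast?_append_of_ne_nil _ hRne,
        List.getLast?_append_of_ne_nil _ (List.cons_ne_nil y₂ []),
        List.getLast?_singleton, Option.mem_some_iff] at hu
      subst hu
      exact (hdom₂ ⟨0, hm0⟩ (show 0 ≤ l - 1 by omega)).2
    · -- membership condition
      intro v hv
      rcases List.mem_append.mp hv with h | h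
      · simp only [List.mem_singleton] at h
        subst h
        exact ⟨hy₁z, fun k hk => (hy₁x ⟨k, hk⟩).elim⟩
      · rcases List.mem_append.mp h with h' | h'
        · obtain ⟨k', hk', hk1', hk2', rfl⟩ := mem_xseg x hm0 (by omega) h'
          refine ⟨fun hc => hzx ⟨_, hc⟩, fun k hk => ?_⟩
          have := hxinj hk
          rw [Fin.mk.injEq] at this
          omega
        · simp only [List.mem_singleton] at h'
          subst h'
          exact ⟨hy₂z, fun k hk => (hy₂x ⟨k, hk⟩).elim⟩
    · -- length
      simp only [List.length_append, List.length_singleton, length_xseg]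
      omega
  · -- Claim (iii)
    intro i hi1 hi2 hi3 hAzi
    have huse : ∀ u v : V, u ∈ Y → v ∈ Y → u ≠ v → u ≠ w → v ≠ w → A u w → A w v →
        A (x ⟨b.val - 1, by omega⟩) u → A v (x ⟨0, hm0⟩) → False := by
      intro u v huY hvY huv huw hvw h1 h2 h3 h4
      refine shape2 i.val [u, w, v] (by omega) (by omega) hAzi (by simp) ?_ ?_ ?_ ?_ ?_ ?_
      · refine List.nodup_cons.mpr ⟨?_, List.nodup_cons.mpr ⟨?_, by simp⟩⟩
        · simp [List.mem_cons, huw, huv]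
        · simp [Ne.symm hvw]
      · show List.IsChain A _
        simp [h1, h2]
      · intro p hp
        simp only [List.head?_cons, Option.mem_some_iff] at hp
        subst hp
        exact h3
      · intro p hp
        simp only [List.getLast?_cons_cons, List.getLast?_singleton,
          Option.mem_some_iff] at hp
        subst hp
        exact h4
      · intro p hp
        simp only [List.mem_cons, List.mem_singleton, List.not_mem_nil, or_false] at hp
        rcases hp with rfl | rfl | rfl
        · exact ⟨hYz _ huY, fun k hk => (hYx _ huY ⟨k, hk⟩).elim⟩
        · exact ⟨hYz _ hwY, fun k hk => (hYx _ hwY ⟨k, hk⟩).elim⟩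
        · exact ⟨hYz _ hvY, fun k hk => (hYx _ hvY ⟨k, hk⟩).elim⟩
      · simp only [List.length_cons, List.length_nil]
        omega
    rcases hwcase with ⟨h1, h2⟩ | ⟨h1, h2⟩
    · exact huse y₁ y₂ hy₁ hy₂ hyne (Ne.symm hwne1) (Ne.symm hwne2) h1 h2
        ((hdom₁ ⟨b.val - 1, by omega⟩ (show l - 1 ≤ b.val - 1 by omega)).1)
        ((hdom₂ ⟨0, hm0⟩ (show 0 ≤ l - 1 by omega)).2)
    · exact huse y₂ y₁ hy₂ hy₁ hyne.symm (Ne.symm hwne2) (Ne.symm hwne1) h1 h2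
        ((hdom₁ ⟨b.val - 1, by omega⟩ (show l - 1 ≤ b.val - 1 by omega)).2)
        ((hdom₂ ⟨0, hm0⟩ (show 0 ≤ l - 1 by omega)).1)
  · -- Claim (iv)
    intro j hj1 hj2 hj3 hAjz
    have huse : ∀ u v : V, u ∈ Y → v ∈ Y → u ≠ v → u ≠ w → v ≠ w → A u w → A w v →
        A (x ⟨m - 1, by omega⟩) u → A v (x ⟨a.val + 1, by omega⟩) → False := by
      intro u v huY hvY huv huw hvw h1 h2 h3 h4
      refine shape1 j.val [u, w, v] (by omega) hj2 hAjz (by simp) ?_ ?_ ?_ ?_ ?_ ?_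
      · refine List.nodup_cons.mpr ⟨?_, List.nodup_cons.mpr ⟨?_, by simp⟩⟩
        · simp [List.mem_cons, huw, huv]
        · simp [Ne.symm hvw]
      · show List.IsChain A _
        simp [h1, h2]
      · intro p hp
        simp only [List.head?_cons, Option.mem_some_iff] at hp
        subst hp
        exact h3
      · intro p hp
        simp only [List.getLast?_cons_cons, List.getLast?_singleton,
          Option.mem_some_iff] at hp
        subst hp
        exact h4
      · intro p hp
        simp only [List.mem_cons, List.mem_singleton, List.not_mem_nil, or_false] at hp
        rcases hp with rfl | rfl | rfl
        · exact ⟨hYz _ huY, fun k hk => (hYx _ huY ⟨k, hk⟩).elim⟩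
        · exact ⟨hYz _ hwY, fun k hk => (hYx _ hwY ⟨k, hk⟩).elim⟩
        · exact ⟨hYz _ hvY, fun k hk => (hYx _ hvY ⟨k, hk⟩).elim⟩
      · simp only [List.length_cons, List.length_nil]
        omega
    rcases hwcase with ⟨h1, h2⟩ | ⟨h1, h2⟩
    · exact huse y₁ y₂ hy₁ hy₂ hyne (Ne.symm hwne1) (Ne.symm hwne2) h1 h2
        ((hdom₁ ⟨m - 1, by omega⟩ (show l - 1 ≤ m - 1 by omega)).1)
        ((hdom₂ ⟨a.val + 1, by omega⟩ (show a.val + 1 ≤ l - 1 by omega)).2)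
    · exact huse y₂ y₁ hy₂ hy₁ hyne.symm (Ne.symm hwne2) (Ne.symm hwne1) h1 h2
        ((hdom₁ ⟨m - 1, by omega⟩ (show l - 1 ≤ m - 1 by omega)).2)
        ((hdom₂ ⟨a.val + 1, by omega⟩ (show a.val + 1 ≤ l - 1 by omega)).1)
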